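/- Let c, ς be real numbers with c > 0 and ς > 0, and set θ = 2c² - ς²/2 and γ = c⁴ + c²ς²/2 + ς⁴/16. Then every complex root z of the quartic z⁴ - θ z² + γ has |Im z| = ς/2. -/
import Mathlib


open Complex

theorem quartic_roots_im (c ς : ℝ) (hc : 0 < c) (hς : 0 < ς) (z : ℂ)
    (hz : z ^ 4 - (2 * (c : ℂ) ^ 2 - (ς : ℂ) ^ 2 / 2) * z ^ 2 +
      ((c : ℂ) ^ 4 + (c : ℂ) ^ 2 * (ς : ℂ) ^ 2 / 2 + (ς : ℂ) ^ 4 / 16) = 0) :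
    |z.im| = ς / 2 := by
  have key : (z - ((c : ℂ) + (ς : ℂ)/2 * I)) * (z + ((c : ℂ) + (ς : ℂ)/2 * I)) *
      ((z - ((c : ℂ) - (ς : ℂ)/2 * I)) * (z + ((c : ℂ) - (ς : ℂ)/2 * I))) = 0 := by
    linear_combination hz + (-2*((ς:ℂ)/2)^2*z^2 - ((ς:ℂ)/2)^2*(2*(c:ℂ)^2 + ((ς:ℂ)/2)^2 - ((ς:ℂ)/2)^2*I^2)) * Complex.I_sq
  have him : z.im = ς/2 ∨ z.im = -(ς/2) := by
    rcases mul_eq_zero.mp key with h | h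
    · rcases mul_eq_zero.mp h with h | h
      · left
        rw [sub_eq_zero] at h; rw [h]; simp
      · right
        rw [add_eq_zero_iff_eq_neg] at h; rw [h]; simp
    · rcases mul_eq_zero.mp h with h | h
      · right
        rw [sub_eq_zero] at h; rw [h]; simp
      · left
        rw [add_eq_zero_iff_eq_neg] at h; rw [h]; simp
  rcases him with h | h <;> rw [h] <;> simp [abs_of_pos, hς.le] <;> positivity
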